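/- Suppose R₁, R₂ ∈ SO(3), g ∈ ℝ³, a, ȧ ∈ ℝ³, and f, h ∈ ℝ³ satisfy a − g = R₁ f = R₂ f and ȧ = R₁ h = R₂ h. If the vectors a − g and ȧ are linearly independent, then R₁ = R₂. -/

import Mathlib

open Matrix
attribute [local instance] Matrix.normedAddCommGroup Matrix.normedSpace

/-- The cross-product (skew-symmetric) matrix of `ω`, satisfying `cm ω *ᵥ x = ω ⨯₃ x`. -/
def cm (ω : Fin 3 → ℝ) : Matrix (Fin 3) (Fin 3) ℝ :=
  !![0, -ω 2, ω 1; ω 2, 0, -ω 0; -ω 1, ω 0, 0]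

/-- `R` is a rotation matrix: orthogonal with determinant 1 (element of SO(3)). -/
def SO3 (R : Matrix (Fin 3) (Fin 3) ℝ) : Prop := Rᵀ * R = 1 ∧ R.det = 1

/-- Euclidean norm on `Fin 3 → ℝ`. -/
noncomputable def enorm3 (x : Fin 3 → ℝ) : ℝ := ‖(WithLp.equiv 2 (Fin 3 → ℝ)).symm x‖

/-- Cross product transforms by the transposed adjugate (cofactor matrix). -/
lemma cross_mulVec_adj (A : Matrix (Fin 3) (Fin 3) ℝ) (u v : Fin 3 → ℝ) :
    (A *ᵥ u) ⨯₃ (A *ᵥ v) = A.adjugateᵀ *ᵥ (u ⨯₃ v) := by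
  funext i
  fin_cases i <;>
    simp [cross_apply, mulVec, dotProduct, Fin.sum_univ_three, adjugate_fin_three,
      transpose_apply] <;> ring

lemma so3_adjugate {A : Matrix (Fin 3) (Fin 3) ℝ} (hA : SO3 A) : A.adjugateᵀ = A := by
  have h1 : A * A.adjugate = 1 := by rw [Matrix.mul_adjugate, hA.2, one_smul]
  have h2 : A * Aᵀ = 1 := mul_eq_one_comm.mpr hA.1
  have : A.adjugate = Aᵀ := by
    calc A.adjugate = (Aᵀ * A) * A.adjugate := by rw [hA.1, Matrix.one_mul]
    _ = Aᵀ * (A * A.adjugate) := by rw [Matrix.mul_assoc]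
    _ = Aᵀ := by rw [h1, Matrix.mul_one]
  rw [this, transpose_transpose]

lemma so3_cross {A : Matrix (Fin 3) (Fin 3) ℝ} (hA : SO3 A) (u v : Fin 3 → ℝ) :
    (A *ᵥ u) ⨯₃ (A *ᵥ v) = A *ᵥ (u ⨯₃ v) := by
  rw [cross_mulVec_adj, so3_adjugate hA]

theorem observability_theorem_core (R₁ R₂ : Matrix (Fin 3) (Fin 3) ℝ)
    (hR₁ : SO3 R₁) (hR₂ : SO3 R₂) (g a ad f h : Fin 3 → ℝ)
    (h1 : a - g = R₁ *ᵥ f) (h2 : a - g = R₂ *ᵥ f)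
    (h3 : ad = R₁ *ᵥ h) (h4 : ad = R₂ *ᵥ h)
    (hli : LinearIndependent ℝ ![a - g, ad]) : R₁ = R₂ := by
  set M := R₂ᵀ * R₁ with hM
  have hMso : SO3 M := by
    constructor
    · have : Mᵀ * M = R₁ᵀ * (R₂ * R₂ᵀ) * R₁ := by
        simp [hM, transpose_mul, Matrix.mul_assoc]
      rw [this, mul_eq_one_comm.mpr hR₂.1, Matrix.mul_one, hR₁.1]
    · rw [hM, det_mul, det_transpose, hR₁.2, hR₂.2, mul_one]
  have hMf : M *ᵥ f = f := by
    have : M *ᵥ f = R₂ᵀ *ᵥ (R₁ *ᵥ f) := (mulVec_mulVec _ _ _).symm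
    rw [this, ← h1, h2, mulVec_mulVec, hR₂.1, one_mulVec]
  have hMh : M *ᵥ h = h := by
    have : M *ᵥ h = R₂ᵀ *ᵥ (R₁ *ᵥ h) := (mulVec_mulVec _ _ _).symm
    rw [this, ← h3, h4, mulVec_mulVec, hR₂.1, one_mulVec]
  have hMc : M *ᵥ (f ⨯₃ h) = f ⨯₃ h := by
    rw [← so3_cross hMso, hMf, hMh]
  -- f ⨯₃ h ≠ 0
  have hcne : (a - g) ⨯₃ ad ≠ 0 := crossProduct_ne_zero_iff_linearIndependent.mpr hli
  have hc1 : (a - g) ⨯₃ ad = R₁ *ᵥ (f ⨯₃ h) := by rw [h1, h3, so3_cross hR₁]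
  have hfh : f ⨯₃ h ≠ 0 := by
    intro hz
    apply hcne
    rw [hc1, hz, mulVec_zero]
  -- B with rows f⨯₃h, f, h is invertible, and B * Mᵀ = B
  set B : Matrix (Fin 3) (Fin 3) ℝ := ![f ⨯₃ h, f, h] with hB
  have hdet : B.det ≠ 0 := by
    intro hz
    have hdp : (f ⨯₃ h) ⬝ᵥ (f ⨯₃ h) = 0 := by
      rw [triple_product_eq_det]; exact hz
    exact hfh (dotProduct_self_eq_zero.mp hdp)
  have hBM : B * Mᵀ = B := by
    funext i j
    have : (B * Mᵀ) i j = (M *ᵥ B i) j := by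
      simp [Matrix.mul_apply, mulVec, dotProduct, transpose_apply, mul_comm]
    rw [this]
    fin_cases i
    · exact congrFun hMc j
    · exact congrFun hMf j
    · exact congrFun hMh j
  have hMT : Mᵀ = 1 := by
    have hBu : IsUnit B.det := isUnit_iff_ne_zero.mpr hdet
    calc Mᵀ = (B⁻¹ * B) * Mᵀ := by rw [Matrix.nonsing_inv_mul B hBu, Matrix.one_mul]
    _ = B⁻¹ * (B * Mᵀ) := by rw [Matrix.mul_assoc]
    _ = B⁻¹ * B := by rw [hBM]
    _ = 1 := Matrix.nonsing_inv_mul B hBu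
  have hM1 : M = 1 := by
    have := congrArg Matrix.transpose hMT
    simpa using this
  have : R₂ * (R₂ᵀ * R₁) = R₂ * 1 := by rw [← hM, hM1]
  rwa [← Matrix.mul_assoc, mul_eq_one_comm.mpr hR₂.1, Matrix.one_mul,
    Matrix.mul_one] at this
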